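/- Let E be a symplectic vector space of dimension 2n, and let A, B be Lagrangian subspaces with dim(A ∩ B) = n − 1. If F is another Lagrangian subspace such that F ∩ A and F ∩ B are both 1-dimensional, then F ∩ A = F ∩ B. -/

import Mathlib

open Module

/-- If a submodule has finrank 1, it is the span of any of its nonzero elements;
here we extract such an element. -/
lemma aux_span_of_finrank_one {E : Type*} [AddCommGroup E] [Module ℂ E]
    [FiniteDimensional ℂ E] (S : Submodule ℂ E) (hS : finrank ℂ S = 1) :
    ∃ x : E, x ≠ 0 ∧ x ∈ S ∧ S = Submodule.span ℂ {x} := by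
  have : Nontrivial S := Module.nontrivial_of_finrank_pos (R := ℂ) (by omega)
  obtain ⟨⟨x, hxS⟩, hx0'⟩ := exists_ne (0 : S)
  have hx0 : x ≠ 0 := fun h => hx0' (Subtype.ext h)
  refine ⟨x, hx0, hxS, ?_⟩
  have hle : Submodule.span ℂ {x} ≤ S := Submodule.span_le.mpr (by simpa using hxS)
  exact (Submodule.eq_of_le_of_finrank_eq hle
    (by rw [finrank_span_singleton hx0, hS])).symm

/-- Let `E` be a symplectic vector space of dimension `2n`, and `A`, `B`
Lagrangian subspaces with `dim (A ∩ B) = n − 1`. If `F` is another Lagrangian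
subspace such that `F ∩ A` and `F ∩ B` are both 1-dimensional, then
`F ∩ A = F ∩ B`. -/
theorem statement5 (E : Type*) [AddCommGroup E] [Module ℂ E] [FiniteDimensional ℂ E]
    (n : ℕ) (hE : finrank ℂ E = 2 * n)
    (ω : LinearMap.BilinForm ℂ E)
    (halt : ∀ x, ω x x = 0)
    (hnd : ∀ x, (∀ y, ω x y = 0) → x = 0)
    (A B F : Submodule ℂ E)
    (hA : A = ω.orthogonal A) (hB : B = ω.orthogonal B) (hF : F = ω.orthogonal F)
    (hAB : finrank ℂ (A ⊓ B : Submodule ℂ E) = n - 1)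
    (hFA : finrank ℂ (F ⊓ A : Submodule ℂ E) = 1)
    (hFB : finrank ℂ (F ⊓ B : Submodule ℂ E) = 1) :
    F ⊓ A = F ⊓ B := by
  have hrefl : ω.IsRefl := LinearMap.IsAlt.isRefl halt
  have hndg : ω.Nondegenerate := ⟨hnd, fun y hy => hnd y (fun x => hrefl _ _ (hy x))⟩
  -- dimensions of Lagrangians
  have hdim : ∀ W : Submodule ℂ E, W = ω.orthogonal W → finrank ℂ W = n := by
    intro W hW
    have h := LinearMap.BilinForm.finrank_orthogonal hndg W
    rw [← hW, hE] at h
    have hle : finrank ℂ W ≤ 2 * n := hE ▸ Submodule.finrank_le W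
    omega
  have hdA := hdim A hA
  have hdB := hdim B hB
  have hdF := hdim F hF
  have hn1 : 1 ≤ n := by
    have : finrank ℂ (F ⊓ A : Submodule ℂ E) ≤ finrank ℂ A :=
      Submodule.finrank_mono inf_le_right
    omega
  -- generators of the 1-dimensional intersections
  obtain ⟨x, hx0, hxFA, hxspan⟩ := aux_span_of_finrank_one _ hFA
  obtain ⟨y, hy0, hyFB, hyspan⟩ := aux_span_of_finrank_one _ hFB
  have hxF : x ∈ F := hxFA.1
  have hxA : x ∈ A := hxFA.2
  have hyF : y ∈ F := hyFB.1
  have hyB : y ∈ B := hyFB.2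
  by_cases hyA : y ∈ A
  · -- then y ∈ F ⊓ A, so F ⊓ A = span y = F ⊓ B
    have hle : Submodule.span ℂ {y} ≤ F ⊓ A :=
      Submodule.span_le.mpr (by simpa using ⟨hyF, hyA⟩)
    rw [hyspan]
    exact (Submodule.eq_of_le_of_finrank_eq hle
      (by rw [hFA, finrank_span_singleton hy0])).symm
  · -- y ∉ A, so B = (A ⊓ B) ⊔ span y
    have hyAB : y ∉ (A ⊓ B : Submodule ℂ E) := fun h => hyA h.1
    have hinf : (A ⊓ B) ⊓ Submodule.span ℂ {y} = ⊥ := by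
      rw [Submodule.eq_bot_iff]
      rintro z ⟨hz1, hz2⟩
      obtain ⟨c, rfl⟩ := Submodule.mem_span_singleton.mp hz2
      rcases eq_or_ne c 0 with rfl | hc
      · simp
      · exfalso
        apply hyAB
        have := (A ⊓ B).smul_mem c⁻¹ hz1
        rwa [smul_smul, inv_mul_cancel₀ hc, one_smul] at this
    have hsup : (A ⊓ B) ⊔ Submodule.span ℂ {y} = B := by
      apply Submodule.eq_of_le_of_finrank_eq
      · exact sup_le inf_le_right (Submodule.span_le.mpr (by simpa using hyB))
      · have h := Submodule.finrank_sup_add_finrank_inf_eq (A ⊓ B) (Submodule.span ℂ {y})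
        rw [hinf, finrank_bot, add_zero, hAB, finrank_span_singleton hy0] at h
        omega
    -- x is orthogonal to B, hence x ∈ B
    have hxB : x ∈ B := by
      rw [hB, LinearMap.BilinForm.mem_orthogonal_iff]
      intro b hb
      rw [← hsup] at hb
      obtain ⟨s, hs, t, ht, rfl⟩ := Submodule.mem_sup.mp hb
      obtain ⟨c, rfl⟩ := Submodule.mem_span_singleton.mp ht
      have h1 : ω s x = 0 := by
        have := hA ▸ hxA
        exact (LinearMap.BilinForm.mem_orthogonal_iff.mp this) s hs.1
      have h2 : ω y x = 0 := by
        have := hF ▸ hxF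
        exact (LinearMap.BilinForm.mem_orthogonal_iff.mp this) y hyF
      show ω (s + c • y) x = 0
      simp [h1, h2]
    -- conclude: span x ≤ F ⊓ B, both have rank 1
    have hle : Submodule.span ℂ {x} ≤ F ⊓ B :=
      Submodule.span_le.mpr (by simpa using ⟨hxF, hxB⟩)
    rw [hxspan]
    exact Submodule.eq_of_le_of_finrank_eq hle
      (by rw [hFB, finrank_span_singleton hx0])
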